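/- Let p(x) and q(x) be real polynomials with only negative zeros, p(0) > 0, q(0) > 0, and suppose that for all A, B, C, D > 0 the polynomials A·p(x) + B·x·q(x) and C·p(x) + D·q(x) have only real zeros. Then (p(x), x·q(x)) is a real pair, i.e., the zeros of p(x) and x·q(x) interlace non-strictly. -/

import Mathlib

open Polynomial

/-- The Jacobi polynomial `P_n^{(α,β)}` as a real polynomial in `x`. -/
noncomputable def jacobiP (α β : ℝ) (n : ℕ) : Polynomial ℝ :=
  C ((ascPochhammer ℝ n).eval (α + 1) / (n.factorial : ℝ)) *
    ∑ k ∈ Finset.range (n + 1),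
      C ((ascPochhammer ℝ k).eval (-(n : ℝ)) * (ascPochhammer ℝ k).eval ((n : ℝ) + α + β + 1) /
          ((k.factorial : ℝ) * (ascPochhammer ℝ k).eval (α + 1))) *
        (C (1 / 2 : ℝ) * (1 - X)) ^ k

/-- `φ_n^{(α,β)}(μ) = Σ_{k=0}^{[n/2]} (d/dx)^{2k} P_n^{(α,β)}(x)|_{x=1} · μ^k`. -/
noncomputable def phi (α β : ℝ) (n : ℕ) : Polynomial ℝ :=
  ∑ k ∈ Finset.range (n / 2 + 1),
    C ((Polynomial.derivative^[2 * k] (jacobiP α β n)).eval 1) * X ^ k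

/-- All complex zeros of `p` are real (i.e. `p` splits over `ℝ`). -/
def RealRooted (p : Polynomial ℝ) : Prop := (p.roots.card : ℕ) = p.natDegree

/-- All zeros of `p` are real and simple. -/
def AllRealSimple (p : Polynomial ℝ) : Prop := RealRooted p ∧ p.roots.Nodup

/-- Zeros of `g` and `h` interlace strictly. -/
def StrictlyInterlacing (g h : Polynomial ℝ) : Prop :=
  AllRealSimple g ∧ AllRealSimple h ∧
  (∀ x : ℝ, ¬(g.IsRoot x ∧ h.IsRoot x)) ∧
  (∀ x y : ℝ, g.IsRoot x → g.IsRoot y → x < y →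
      (∀ t : ℝ, g.IsRoot t → ¬(x < t ∧ t < y)) →
      ∃! z : ℝ, h.IsRoot z ∧ x < z ∧ z < y) ∧
  (∀ x y : ℝ, h.IsRoot x → h.IsRoot y → x < y →
      (∀ t : ℝ, h.IsRoot t → ¬(x < t ∧ t < y)) →
      ∃! z : ℝ, g.IsRoot z ∧ x < z ∧ z < y)

/-- `(g,h)` is a real pair: every real combination has only real zeros.
This is equivalent to non-strict interlacing of the zeros. -/
def RealPair (g h : Polynomial ℝ) : Prop :=
  ∀ a b : ℝ, RealRooted (C a * g + C b * h)

/-- The zero of `p` closest to the origin, when all zeros of `p` are negative. -/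
noncomputable def maxRoot (p : Polynomial ℝ) : ℝ := sSup {x : ℝ | p.IsRoot x}

/-- `f` is Hurwitz stable: all complex zeros lie in the open left half-plane. -/
def HurwitzStable (f : Polynomial ℝ) : Prop :=
  ∀ z : ℂ, Polynomial.aeval z f = 0 → z.re < 0

namespace RPaux

open Real Filter Topology Set

/-! ### Basic polynomial lemmas -/

lemma aeval_eq_prod {p : Polynomial ℝ} (hp : (Multiset.card p.roots : ℕ) = p.natDegree) (z : ℂ) :
    aeval z p = (p.leadingCoeff : ℂ) * (Multiset.map (fun r : ℝ => z - (r : ℂ)) p.roots).prod := by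
  conv_lhs => rw [← Polynomial.C_leadingCoeff_mul_prod_multiset_X_sub_C hp]
  rw [map_mul, Polynomial.aeval_C, map_multiset_prod, Multiset.map_map]
  congr 1
  refine congrArg (fun M : Multiset ℂ => M.prod) (Multiset.map_congr rfl ?_)
  intro r _
  simp [Polynomial.aeval_X, Polynomial.aeval_C, Complex.coe_algebraMap]

lemma aeval_ne_zero_of_im {p : Polynomial ℝ} (hp : (Multiset.card p.roots : ℕ) = p.natDegree)
    (hp0 : p ≠ 0) {z : ℂ} (hz : z.im ≠ 0) : aeval z p ≠ 0 := by
  rw [aeval_eq_prod hp]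
  apply mul_ne_zero
  · exact_mod_cast Polynomial.leadingCoeff_ne_zero.2 hp0
  · apply Multiset.prod_ne_zero
    intro h0
    obtain ⟨r, _, hr⟩ := Multiset.mem_map.1 h0
    apply hz
    have : z = (r : ℂ) := by linear_combination hr
    rw [this, Complex.ofReal_im]

lemma leadingCoeff_pos {p : Polynomial ℝ} (hp : (Multiset.card p.roots : ℕ) = p.natDegree)
    (hneg : ∀ x ∈ p.roots, x < 0) (h0 : 0 < p.eval 0) : 0 < p.leadingCoeff := by
  have h := Polynomial.C_leadingCoeff_mul_prod_multiset_X_sub_C hp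
  have he : p.eval 0 = p.leadingCoeff * ((p.roots.map (fun r => -r)).prod) := by
    conv_lhs => rw [← h]
    rw [Polynomial.eval_mul, Polynomial.eval_C, Polynomial.eval_multiset_prod, Multiset.map_map]
    congr 2
    apply Multiset.map_congr rfl
    intro r hr
    simp
  have hprod : 0 < (p.roots.map (fun r => -r)).prod := by
    apply Multiset.prod_pos
    intro a ha
    obtain ⟨r, hr, rfl⟩ := Multiset.mem_map.1 ha
    linarith [hneg r hr]
  nlinarith [he ▸ h0]

lemma aeval_conj (f : Polynomial ℝ) (z : ℂ) :
    aeval ((starRingEnd ℂ) z) f = (starRingEnd ℂ) (aeval z f) := by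
  have := Polynomial.aeval_algHom_apply (Complex.conjAe.toAlgHom) z f
  simpa using this

lemma realRooted_of_complex : ∀ (n : ℕ) (f : Polynomial ℝ), f.natDegree ≤ n →
    (∀ z : ℂ, aeval z f = 0 → z.im = 0) → (Multiset.card f.roots : ℕ) = f.natDegree := by
  intro n
  induction n with
  | zero => intro f hf _; have := Polynomial.card_roots' f; omega
  | succ n ih =>
    intro f hf hroots
    by_cases hdeg : f.natDegree = 0
    · have := Polynomial.card_roots' f; omega
    have hf0 : f ≠ 0 := fun h => hdeg (by simp [h])
    have hmapdeg : 0 < (f.map (algebraMap ℝ ℂ)).degree := by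
      rw [Polynomial.degree_map]
      exact Polynomial.natDegree_pos_iff_degree_pos.1 (Nat.pos_of_ne_zero hdeg)
    obtain ⟨z, hz⟩ := Complex.exists_root hmapdeg
    have hz' : aeval z f = 0 := by
      rwa [Polynomial.aeval_def, ← Polynomial.eval_map]
    have him : z.im = 0 := hroots z hz'
    set r : ℝ := z.re with hr
    have hzr : z = (r : ℂ) := Complex.ext rfl (by simp [him])
    have hroot : f.IsRoot r := by
      have : aeval ((r : ℝ) : ℂ) f = 0 := by rw [← hzr]; exact hz'
      rw [show ((r : ℝ) : ℂ) = algebraMap ℝ ℂ r from rfl,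
        Polynomial.aeval_algebraMap_apply] at this
      have h2 : (algebraMap ℝ ℂ) (aeval r f) = 0 := this
      have h3 : aeval r f = 0 := by
        rw [show (algebraMap ℝ ℂ) ((aeval r) f) = ((aeval r f : ℝ) : ℂ) from rfl,
          Complex.ofReal_eq_zero] at h2
        exact h2
      rwa [Polynomial.coe_aeval_eq_eval] at h3
    obtain ⟨g, hg⟩ := Polynomial.dvd_iff_isRoot.2 hroot
    have hg0 : g ≠ 0 := by rintro rfl; simp at hg; exact hf0 hg
    have hXC : (X - C r : Polynomial ℝ) ≠ 0 := Polynomial.X_sub_C_ne_zero r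
    have hdegg : g.natDegree ≤ n := by
      have := Polynomial.natDegree_mul hXC hg0
      rw [← hg] at this
      rw [Polynomial.natDegree_X_sub_C] at this
      omega
    have hrootsg : ∀ z : ℂ, aeval z g = 0 → z.im = 0 := by
      intro w hw
      apply hroots w
      rw [hg, map_mul, hw, mul_zero]
    have hcard := ih g hdegg hrootsg
    have hrm : f.roots = (X - C r).roots + g.roots := by
      rw [hg]; exact Polynomial.roots_mul (hg ▸ hf0)
    rw [hrm, Polynomial.roots_X_sub_C]
    have hnd : f.natDegree = 1 + g.natDegree := by
      rw [hg, Polynomial.natDegree_mul hXC hg0, Polynomial.natDegree_X_sub_C]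
    rw [hnd, Multiset.card_add, Multiset.card_singleton, hcard]

/-! ### Angle machinery -/

noncomputable def ang (z : ℂ) (t : ℝ) : ℝ := π/2 + Real.arctan ((t - z.re)/z.im)

lemma ang_pos (z : ℂ) (t : ℝ) : 0 < ang z t := by
  have := Real.neg_pi_div_two_lt_arctan ((t - z.re)/z.im); unfold ang; linarith

lemma ang_lt_pi (z : ℂ) (t : ℝ) : ang z t < π := by
  have := Real.arctan_lt_pi_div_two ((t - z.re)/z.im)
  have h := Real.pi_pos; unfold ang; linarith

lemma ang_strictMono {z : ℂ} (hz : 0 < z.im) {s t : ℝ} (h : s < t) : ang z s < ang z t := by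
  unfold ang
  have h2 : (s - z.re)/z.im < (t - z.re)/z.im := by gcongr
  have := Real.arctan_strictMono h2
  linarith

lemma ang_mono {z : ℂ} (hz : 0 < z.im) {s t : ℝ} (h : s ≤ t) : ang z s ≤ ang z t := by
  rcases eq_or_lt_of_le h with rfl | h'
  · exact le_refl _
  · exact (ang_strictMono hz h').le

lemma ang_spec {z : ℂ} (hz : 0 < z.im) (t : ℝ) :
    z - (t : ℂ) = (‖z - t‖ : ℝ) * Complex.exp ((ang z t) * Complex.I) := by
  have hy : z.im ≠ 0 := ne_of_gt hz
  set x := z.re with hx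
  set y := z.im with hyd
  set u := (t - x)/y with hu
  set S := (x - t)^2 + y^2 with hS
  have hSpos : 0 < S := by positivity
  have hrS : (0:ℝ) < Real.sqrt S := Real.sqrt_pos.2 hSpos
  have hsq : Real.sqrt (1 + u^2) = Real.sqrt S / y := by
    rw [show (1:ℝ) + u^2 = S / y^2 by rw [hu, hS]; field_simp; ring]
    rw [Real.sqrt_div hSpos.le, Real.sqrt_sq hz.le]
  have hcos : Real.cos (ang z t) = (x - t)/Real.sqrt S := by
    unfold ang
    rw [show π/2 + Real.arctan u = Real.arctan u + π/2 by ring]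
    rw [Real.cos_add_pi_div_two, Real.sin_arctan, hsq]
    rw [hu]
    field_simp
    ring
  have hsin : Real.sin (ang z t) = y/Real.sqrt S := by
    unfold ang
    rw [show π/2 + Real.arctan u = Real.arctan u + π/2 by ring]
    rw [Real.sin_add_pi_div_two, Real.cos_arctan, hsq]
    field_simp
  have habs : (‖z - t‖) = Real.sqrt S := by
    rw [Complex.norm_def, Complex.normSq_apply]
    simp only [Complex.sub_re, Complex.sub_im, Complex.ofReal_re, Complex.ofReal_im, ← hx, ← hyd]
    rw [hS]; ring_nf
  apply Complex.ext <;>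
    simp only [Complex.sub_re, Complex.sub_im, Complex.ofReal_re, Complex.ofReal_im, Complex.mul_re,
      Complex.mul_im, Complex.exp_ofReal_mul_I_re, Complex.exp_ofReal_mul_I_im, habs, hcos, hsin]
  · field_simp
    rw [hx]; ring
  · field_simp
    rw [hyd]; ring

noncomputable def msum (M : Multiset ℝ) (z : ℂ) : ℝ := (M.map (ang z)).sum

@[simp] lemma msum_empty (z : ℂ) : msum 0 z = 0 := rfl

lemma msum_cons (t : ℝ) (M : Multiset ℝ) (z : ℂ) :
    msum (t ::ₘ M) z = ang z t + msum M z := by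
  unfold msum; rw [Multiset.map_cons, Multiset.sum_cons]

lemma msum_nonneg (M : Multiset ℝ) (z : ℂ) : 0 ≤ msum M z := by
  apply Multiset.sum_nonneg
  intro a ha
  obtain ⟨t, _, rfl⟩ := Multiset.mem_map.1 ha
  exact (ang_pos z t).le

lemma msum_polar (M : Multiset ℝ) {z : ℂ} (hz : 0 < z.im) :
    (Multiset.map (fun t : ℝ => z - (t : ℂ)) M).prod
      = ((Multiset.map (fun t : ℝ => ‖z - (t : ℂ)‖) M).prod : ℝ) *
          Complex.exp ((msum M z) * Complex.I) := by
  induction M using Multiset.induction with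
  | empty => simp
  | cons t M ih =>
    rw [Multiset.map_cons, Multiset.prod_cons, Multiset.map_cons, Multiset.prod_cons, ih,
      msum_cons]
    conv_lhs => rw [ang_spec hz t]
    push_cast
    rw [add_mul, Complex.exp_add]
    ring

lemma abs_prod_pos (M : Multiset ℝ) {z : ℂ} (hz : 0 < z.im) :
    0 < (Multiset.map (fun t : ℝ => ‖z - (t : ℂ)‖) M).prod := by
  apply Multiset.prod_pos
  intro a ha
  obtain ⟨t, ht, rfl⟩ := Multiset.mem_map.1 ha
  apply norm_pos_iff.2
  intro h
  have : z.im = 0 := by rw [show z = (t:ℂ) by linear_combination h, Complex.ofReal_im]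
  linarith

lemma aeval_polar {p : Polynomial ℝ} (hp : (Multiset.card p.roots : ℕ) = p.natDegree)
    (hlc : 0 < p.leadingCoeff) {z : ℂ} (hz : 0 < z.im) :
    ∃ ρ : ℝ, 0 < ρ ∧ aeval z p = (ρ : ℂ) * Complex.exp ((msum p.roots z) * Complex.I) := by
  refine ⟨p.leadingCoeff * (Multiset.map (fun t : ℝ => ‖z - (t : ℂ)‖) p.roots).prod,
    mul_pos hlc (abs_prod_pos _ hz), ?_⟩
  rw [aeval_eq_prod hp, msum_polar _ hz]
  push_cast
  ring

/-! ### Multiset count-comparison lemma -/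

lemma exists_max (B : Multiset ℝ) (hB : B ≠ 0) : ∃ b ∈ B, ∀ c ∈ B, c ≤ b := by
  have hne : B.toFinset.Nonempty := by
    rw [Multiset.toFinset_nonempty]; exact hB
  refine ⟨B.toFinset.max' hne, Multiset.mem_toFinset.1 (B.toFinset.max'_mem hne), ?_⟩
  intro c hc
  exact B.toFinset.le_max' c (Multiset.mem_toFinset.2 hc)

lemma sum_le_sum_of_counts (θ : ℝ → ℝ) (hθ0 : ∀ t, 0 ≤ θ t) (hmono : Monotone θ) :
    ∀ (n : ℕ) (A B : Multiset ℝ), Multiset.card B ≤ n →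
    (∀ x : ℝ, x ∉ A → x ∉ B →
      Multiset.card (B.filter (x < ·)) ≤ Multiset.card (A.filter (x < ·))) →
    (B.map θ).sum ≤ (A.map θ).sum := by
  have hsum0 : ∀ A : Multiset ℝ, (0:ℝ) ≤ (A.map θ).sum := by
    intro A
    apply Multiset.sum_nonneg
    intro x hx
    obtain ⟨t, _, rfl⟩ := Multiset.mem_map.1 hx
    exact hθ0 t
  intro n
  induction n with
  | zero =>
    intro A B hB _
    have hB0 : B = 0 := by rwa [Nat.le_zero, Multiset.card_eq_zero] at hB
    subst hB0
    simpa using hsum0 A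
  | succ n ih =>
    intro A B hcard h
    by_cases hB : B = 0
    · subst hB; simpa using hsum0 A
    obtain ⟨b, hbB, hbmax⟩ := exists_max B hB
    have hA : ∃ a ∈ A, b ≤ a := by
      by_contra hno
      push_neg at hno
      set G : Finset ℝ := insert (b-1) A.toFinset with hG
      have hGne : G.Nonempty := Finset.insert_nonempty _ _
      set c := G.max' hGne with hc
      have hcb : c < b := by
        rcases Finset.mem_insert.1 (G.max'_mem hGne) with h1 | h2
        · rw [hc, h1]; linarith
        · exact hno _ (Multiset.mem_toFinset.1 h2)
      obtain ⟨x, hxI, hxF⟩ := (Set.Ioo_infinite hcb).exists_notMem_finset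
        (A.toFinset ∪ B.toFinset)
      have hxA : x ∉ A := fun hx => hxF (Finset.mem_union_left _ (Multiset.mem_toFinset.2 hx))
      have hxB : x ∉ B := fun hx => hxF (Finset.mem_union_right _ (Multiset.mem_toFinset.2 hx))
      have hfA : Multiset.card (A.filter (x < ·)) = 0 := by
        rw [Multiset.card_eq_zero, Multiset.filter_eq_nil]
        intro a haA
        have : a ≤ c := G.le_max' a (Finset.mem_insert_of_mem (Multiset.mem_toFinset.2 haA))
        have := hxI.1
        simp only [not_lt]
        linarith
      have hfB : 0 < Multiset.card (B.filter (x < ·)) := by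
        rw [Multiset.card_pos]
        intro hnil
        have : b ∈ B.filter (x < ·) := Multiset.mem_filter.2 ⟨hbB, hxI.2⟩
        rw [hnil] at this
        simp at this
      have := h x hxA hxB
      omega
    obtain ⟨a, haA, hba⟩ := hA
    set A' := A.erase a with hA'
    set B' := B.erase b with hB'
    have hAeq : A = a ::ₘ A' := (Multiset.cons_erase haA).symm
    have hBeq : B = b ::ₘ B' := (Multiset.cons_erase hbB).symm
    have hcard' : Multiset.card B' ≤ n := by
      have : Multiset.card B = Multiset.card B' + 1 := by
        rw [hBeq, Multiset.card_cons]
      omega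
    have h' : ∀ x : ℝ, x ∉ A' → x ∉ B' →
        Multiset.card (B'.filter (x < ·)) ≤ Multiset.card (A'.filter (x < ·)) := by
      intro x hxA' hxB'
      by_cases hxb : b ≤ x
      · have : Multiset.card (B'.filter (x < ·)) = 0 := by
          rw [Multiset.card_eq_zero, Multiset.filter_eq_nil]
          intro c hcB'
          have hcB : c ∈ B := by rw [hBeq]; exact Multiset.mem_cons_of_mem hcB'
          have := hbmax c hcB
          simp only [not_lt]
          linarith
        omega
      push_neg at hxb
      have hxa : x < a := lt_of_lt_of_le hxb hba
      have hxA : x ∉ A := by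
        rw [hAeq]
        intro hx
        rcases Multiset.mem_cons.1 hx with rfl | hx'
        · exact absurd rfl (ne_of_lt hxa)
        · exact hxA' hx'
      have hxB : x ∉ B := by
        rw [hBeq]
        intro hx
        rcases Multiset.mem_cons.1 hx with rfl | hx'
        · exact absurd rfl (ne_of_lt hxb)
        · exact hxB' hx'
      have hx := h x hxA hxB
      have hca : Multiset.card (A.filter (x < ·)) = Multiset.card (A'.filter (x < ·)) + 1 := by
        rw [hAeq, Multiset.filter_cons_of_pos _ hxa, Multiset.card_cons]
      have hcb : Multiset.card (B.filter (x < ·)) = Multiset.card (B'.filter (x < ·)) + 1 := by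
        rw [hBeq, Multiset.filter_cons_of_pos _ hxb, Multiset.card_cons]
      omega
    have hrec := ih A' B' hcard' h'
    rw [hAeq, hBeq, Multiset.map_cons, Multiset.map_cons, Multiset.sum_cons, Multiset.sum_cons]
    exact add_le_add (hmono hba) hrec

/-! ### Limit lemmas -/

lemma re_aux (x y : ℝ) : ((x:ℂ) + y * Complex.I).re = x := by simp
lemma im_aux (x y : ℝ) : ((x:ℂ) + y * Complex.I).im = y := by simp

lemma ang_tendsto_bot {x t : ℝ} (h : t < x) :
    Tendsto (fun y : ℝ => ang ((x:ℂ) + y * Complex.I) t) (𝓝[>] (0:ℝ)) (𝓝 0) := by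
  have heq : ∀ y : ℝ, ang ((x:ℂ) + y * Complex.I) t = π/2 + arctan ((t - x) * y⁻¹) := by
    intro y; unfold ang; rw [re_aux, im_aux, div_eq_mul_inv (t - x) y]
  simp only [heq]
  have htop : Tendsto (fun y : ℝ => (t - x) * y⁻¹) (𝓝[>] (0:ℝ)) atBot := by
    apply Filter.Tendsto.const_mul_atTop_of_neg (by linarith : t - x < 0) tendsto_inv_nhdsGT_zero
  have harc : Tendsto (fun y : ℝ => arctan ((t - x) * y⁻¹)) (𝓝[>] (0:ℝ)) (𝓝 (-(π/2))) :=
    (Real.tendsto_arctan_atBot.mono_right nhdsWithin_le_nhds).comp htop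
  have := harc.const_add (π/2)
  simpa using this

lemma ang_tendsto_top {x t : ℝ} (h : x < t) :
    Tendsto (fun y : ℝ => ang ((x:ℂ) + y * Complex.I) t) (𝓝[>] (0:ℝ)) (𝓝 π) := by
  have heq : ∀ y : ℝ, ang ((x:ℂ) + y * Complex.I) t = π/2 + arctan ((t - x) * y⁻¹) := by
    intro y; unfold ang; rw [re_aux, im_aux, div_eq_mul_inv (t - x) y]
  simp only [heq]
  have htop : Tendsto (fun y : ℝ => (t - x) * y⁻¹) (𝓝[>] (0:ℝ)) atTop := by
    apply Filter.Tendsto.const_mul_atTop (by linarith : (0:ℝ) < t - x) tendsto_inv_nhdsGT_zero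
  have harc : Tendsto (fun y : ℝ => arctan ((t - x) * y⁻¹)) (𝓝[>] (0:ℝ)) (𝓝 (π/2)) :=
    (Real.tendsto_arctan_atTop.mono_right nhdsWithin_le_nhds).comp htop
  have := harc.const_add (π/2)
  have h2 : π/2 + π/2 = π := by ring
  rwa [h2] at this

lemma msum_tendsto (M : Multiset ℝ) (x : ℝ) (hx : x ∉ M) :
    Tendsto (fun y : ℝ => msum M ((x:ℂ) + y * Complex.I)) (𝓝[>] (0:ℝ))
      (𝓝 (π * (Multiset.card (M.filter (x < ·)) : ℝ))) := by
  induction M using Multiset.induction with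
  | empty => simpa using tendsto_const_nhds
  | cons t M ih =>
    have hx' : x ∉ M := fun hm => hx (Multiset.mem_cons_of_mem hm)
    have hxt : x ≠ t := fun hh => hx (hh ▸ Multiset.mem_cons_self t M)
    simp only [msum_cons]
    rcases lt_or_gt_of_ne hxt with hlt | hgt
    · have h1 := (ang_tendsto_top hlt).add (ih hx')
      rw [Multiset.filter_cons_of_pos _ hlt, Multiset.card_cons]
      convert h1 using 2
      push_cast
      ring
    · have h1 := (ang_tendsto_bot hgt).add (ih hx')
      rw [Multiset.filter_cons_of_neg _ (by simpa using hgt.le)]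
      simpa using h1

/-! ### Continuity -/

lemma ang_continuousOn (t : ℝ) : ContinuousOn (fun z : ℂ => ang z t) {z : ℂ | 0 < z.im} := by
  unfold ang
  apply ContinuousOn.add continuousOn_const
  apply Real.continuous_arctan.comp_continuousOn
  apply ContinuousOn.div
  · exact (continuous_const.sub Complex.continuous_re).continuousOn
  · exact Complex.continuous_im.continuousOn
  · intro z hz
    exact ne_of_gt hz

lemma msum_continuousOn (M : Multiset ℝ) :
    ContinuousOn (fun z : ℂ => msum M z) {z : ℂ | 0 < z.im} := by
  induction M using Multiset.induction with
  | empty => simpa using continuousOn_const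
  | cons t M ih =>
    simp only [msum_cons]
    exact (ang_continuousOn t).add ih

end RPaux

open Real Filter Topology Set

/-- Conversely, if all positive combinations `a·p + b·x·q` and `c·p + d·q` have only real
zeros, then `(p, x·q)` is a real pair, i.e. the zeros of `p` and `x·q` interlace
non-strictly. -/
theorem combinations_imply_real_pair (p q : Polynomial ℝ)
    (hp : RealRooted p) (hq : RealRooted q)
    (hpneg : ∀ x ∈ p.roots, x < 0) (hqneg : ∀ x ∈ q.roots, x < 0)
    (hp0 : 0 < p.eval 0) (hq0 : 0 < q.eval 0)
    (hcomb : ∀ a b c d : ℝ, 0 < a → 0 < b → 0 < c → 0 < d →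
      RealRooted (C a * p + C b * X * q) ∧ RealRooted (C c * p + C d * q)) :
    RealPair p (X * q) := by
  classical
  have hpne : p ≠ 0 := fun h => by simp [h] at hp0
  have hqne : q ≠ 0 := fun h => by simp [h] at hq0
  have hpR : (Multiset.card p.roots : ℕ) = p.natDegree := hp
  have hqR : (Multiset.card q.roots : ℕ) = q.natDegree := hq
  have hlcp : 0 < p.leadingCoeff := RPaux.leadingCoeff_pos hpR hpneg hp0
  have hlcq : 0 < q.leadingCoeff := RPaux.leadingCoeff_pos hqR hqneg hq0
  set R := p.roots with hRdef
  set S := q.roots with hSdef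
  set Θ : ℂ → ℝ := fun z => RPaux.ang z 0 + RPaux.msum S z - RPaux.msum R z with hΘdef
  set Φ : ℂ → ℝ := fun z => RPaux.msum S z - RPaux.msum R z with hΦdef
  -- polar forms
  have hphase : ∀ z : ℂ, 0 < z.im → ∃ ρP ρQ : ℝ, 0 < ρP ∧ 0 < ρQ ∧
      aeval z p = (ρP:ℂ) * Complex.exp ((RPaux.msum R z) * Complex.I) ∧
      aeval z q = (ρQ:ℂ) * Complex.exp ((RPaux.msum S z) * Complex.I) := by
    intro z hz
    obtain ⟨ρP, hρP, hP⟩ := RPaux.aeval_polar hpR hlcp hz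
    obtain ⟨ρQ, hρQ, hQ⟩ := RPaux.aeval_polar hqR hlcq hz
    exact ⟨ρP, ρQ, hρP, hρQ, hP, hQ⟩
  -- nonvanishing of positive combinations off the real axis
  have hcombo1 : ∀ a : ℝ, 0 < a → ∀ z : ℂ, 0 < z.im →
      (a:ℂ) * aeval z p + z * aeval z q ≠ 0 := by
    intro a ha z hz
    have h1 := (hcomb a 1 1 1 ha one_pos one_pos one_pos).1
    have hne : (C a * p + C 1 * X * q) ≠ 0 := by
      intro h0
      have he : (C a * p + C 1 * X * q).eval 0 = 0 := by rw [h0]; simp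
      rw [eval_add, eval_mul, eval_C, eval_mul, eval_mul, eval_C, eval_X] at he
      nlinarith
    have h2 := RPaux.aeval_ne_zero_of_im h1 hne (ne_of_gt hz)
    intro h0
    apply h2
    rw [map_add, map_mul, map_mul, map_mul, aeval_C, aeval_C, aeval_X]
    simpa using h0
  have hcombo2 : ∀ c : ℝ, 0 < c → ∀ z : ℂ, 0 < z.im →
      (c:ℂ) * aeval z p + aeval z q ≠ 0 := by
    intro c hc z hz
    have h1 := (hcomb 1 1 c 1 one_pos one_pos hc one_pos).2
    have hne : (C c * p + C 1 * q) ≠ 0 := by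
      intro h0
      have he : (C c * p + C 1 * q).eval 0 = 0 := by rw [h0]; simp
      rw [eval_add, eval_mul, eval_C, eval_mul, eval_C] at he
      nlinarith
    have h2 := RPaux.aeval_ne_zero_of_im h1 hne (ne_of_gt hz)
    intro h0
    apply h2
    rw [map_add, map_mul, map_mul, aeval_C, aeval_C]
    simpa using h0
  -- avoidance of ±π
  have hmexp : Complex.exp (((-π : ℝ) : ℂ) * Complex.I) = -1 := by
    push_cast
    rw [neg_mul, Complex.exp_neg, Complex.exp_pi_mul_I]
    norm_num
  have hpexp : Complex.exp (((π : ℝ) : ℂ) * Complex.I) = -1 :=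
    Complex.exp_pi_mul_I
  have havoidΘ : ∀ z : ℂ, 0 < z.im → Θ z ≠ π ∧ Θ z ≠ -π := by
    intro z hz
    obtain ⟨ρP, ρQ, hρP, hρQ, hP, hQ⟩ := hphase z hz
    have hzne : z ≠ 0 := fun h => by rw [h] at hz; simp at hz
    have habsz : 0 < ‖z‖ := norm_pos_iff.2 hzne
    have hz0 : z = ((‖z‖ : ℝ) : ℂ) * Complex.exp ((RPaux.ang z 0 : ℝ) * Complex.I) := by
      have := RPaux.ang_spec hz 0
      simpa using this
    have key : ∀ ε : ℝ, Complex.exp ((ε : ℂ) * Complex.I) = -1 → Θ z ≠ ε := by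
      intro ε hε hΘeq
      have hΘv : RPaux.ang z 0 + RPaux.msum S z - RPaux.msum R z = ε := by
        rw [← hΘeq]
      set a := ‖z‖ * ρQ / ρP with ha
      have hapos : 0 < a := by positivity
      apply hcombo1 a hapos z hz
      rw [hP, hQ]
      have hρPne : (ρP : ℂ) ≠ 0 := by exact_mod_cast ne_of_gt hρP
      have haρ : (a : ℂ) * (ρP : ℂ) = ((‖z‖ : ℝ) : ℂ) * (ρQ : ℂ) := by
        rw [ha]
        push_cast
        field_simp
      have hexp2 : Complex.exp ((RPaux.ang z 0 : ℝ) * Complex.I) *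
          Complex.exp ((RPaux.msum S z : ℝ) * Complex.I)
          = Complex.exp ((RPaux.msum R z : ℝ) * Complex.I) * (-1) := by
        rw [← hε, ← Complex.exp_add, ← Complex.exp_add, ← add_mul, ← add_mul]
        norm_cast
        rw [show RPaux.ang z 0 + RPaux.msum S z = RPaux.msum R z + ε by linarith [hΘv]]
      linear_combination ((ρQ : ℂ) * Complex.exp ((RPaux.msum S z : ℝ) * Complex.I)) * hz0 +
        (((‖z‖ : ℝ) : ℂ) * (ρQ : ℂ)) * hexp2 +
        (Complex.exp ((RPaux.msum R z : ℝ) * Complex.I)) * haρ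
    exact ⟨key π hpexp, key (-π) hmexp⟩
  have havoidΦ : ∀ z : ℂ, 0 < z.im → Φ z ≠ π ∧ Φ z ≠ -π := by
    intro z hz
    obtain ⟨ρP, ρQ, hρP, hρQ, hP, hQ⟩ := hphase z hz
    have key : ∀ ε : ℝ, Complex.exp ((ε : ℂ) * Complex.I) = -1 → Φ z ≠ ε := by
      intro ε hε hΦeq
      have hΦv : RPaux.msum S z - RPaux.msum R z = ε := by
        rw [← hΦeq]
      set c := ρQ / ρP with hc
      have hcpos : 0 < c := by positivity
      apply hcombo2 c hcpos z hz
      rw [hP, hQ]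
      have hρPne : (ρP : ℂ) ≠ 0 := by exact_mod_cast ne_of_gt hρP
      have hcρ : (c : ℂ) * (ρP : ℂ) = (ρQ : ℂ) := by
        rw [hc]
        push_cast
        field_simp
      have hexp2 : Complex.exp ((RPaux.msum S z : ℝ) * Complex.I)
          = Complex.exp ((RPaux.msum R z : ℝ) * Complex.I) * (-1) := by
        rw [← hε, ← Complex.exp_add, ← add_mul]
        norm_cast
        rw [show RPaux.msum S z = RPaux.msum R z + ε by linarith [hΦv]]
      linear_combination (Complex.exp ((RPaux.msum R z : ℝ) * Complex.I)) * hcρ +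
        (ρQ : ℂ) * hexp2
    exact ⟨key π hpexp, key (-π) hmexp⟩
  -- continuity
  have hΘcont : ContinuousOn Θ {z : ℂ | 0 < z.im} := by
    exact ((RPaux.ang_continuousOn 0).add (RPaux.msum_continuousOn S)).sub
      (RPaux.msum_continuousOn R)
  have hΦcont : ContinuousOn Φ {z : ℂ | 0 < z.im} := by
    exact (RPaux.msum_continuousOn S).sub (RPaux.msum_continuousOn R)
  -- boundary limits at x = 1
  have h1R : (1:ℝ) ∉ R := fun h => by have := hpneg 1 h; linarith
  have h1S : (1:ℝ) ∉ S := fun h => by have := hqneg 1 h; linarith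
  have hfR : Multiset.card (R.filter ((1:ℝ) < ·)) = 0 := by
    rw [Multiset.card_eq_zero, Multiset.filter_eq_nil]
    intro r hr
    have := hpneg r hr
    simp only [not_lt]
    linarith
  have hfS : Multiset.card (S.filter ((1:ℝ) < ·)) = 0 := by
    rw [Multiset.card_eq_zero, Multiset.filter_eq_nil]
    intro r hr
    have := hqneg r hr
    simp only [not_lt]
    linarith
  have hR0 : Tendsto (fun y : ℝ => RPaux.msum R (((1:ℝ):ℂ) + y * Complex.I))
      (𝓝[>] (0:ℝ)) (𝓝 0) := by
    have := RPaux.msum_tendsto R 1 h1R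
    rw [hfR] at this
    simpa using this
  have hS0 : Tendsto (fun y : ℝ => RPaux.msum S (((1:ℝ):ℂ) + y * Complex.I))
      (𝓝[>] (0:ℝ)) (𝓝 0) := by
    have := RPaux.msum_tendsto S 1 h1S
    rw [hfS] at this
    simpa using this
  have h00 : Tendsto (fun y : ℝ => RPaux.ang (((1:ℝ):ℂ) + y * Complex.I) 0)
      (𝓝[>] (0:ℝ)) (𝓝 0) := RPaux.ang_tendsto_bot (by norm_num)
  have hlim1Θ : Tendsto (fun y : ℝ => Θ (((1:ℝ):ℂ) + y * Complex.I)) (𝓝[>] (0:ℝ)) (𝓝 0) := by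
    simp only [hΘdef]
    have := (h00.add hS0).sub hR0
    simpa using this
  have hlim1Φ : Tendsto (fun y : ℝ => Φ (((1:ℝ):ℂ) + y * Complex.I)) (𝓝[>] (0:ℝ)) (𝓝 0) := by
    simp only [hΦdef]
    have := hS0.sub hR0
    simpa using this
  -- windows
  have hwindow : ∀ F : ℂ → ℝ, ContinuousOn F {w : ℂ | 0 < w.im} →
      (∀ w : ℂ, 0 < w.im → F w ≠ π ∧ F w ≠ -π) →
      Tendsto (fun y : ℝ => F (((1:ℝ):ℂ) + y * Complex.I)) (𝓝[>] (0:ℝ)) (𝓝 0) →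
      ∀ w : ℂ, 0 < w.im → -π < F w ∧ F w < π := by
    intro F hFcont hFavoid hFlim w hw
    have habs1 : ∀ᶠ v in 𝓝 (0:ℝ), |v| < 1 := by
      have h := Metric.ball_mem_nhds (0:ℝ) one_pos
      simp [Metric.ball, Real.dist_eq] at h
      exact h
    have hev := (hFlim.eventually habs1).and (eventually_mem_nhdsWithin)
    obtain ⟨y₁, hy₁abs, hy₁pos⟩ := hev.exists
    set z₁ : ℂ := ((1:ℝ):ℂ) + y₁ * Complex.I with hz₁def
    have hz₁im : 0 < z₁.im := by rw [hz₁def, RPaux.im_aux]; exact hy₁pos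
    set γ : ℝ → ℂ := fun s => z₁ + (s:ℂ) * (w - z₁) with hγdef
    have hγ0 : γ 0 = z₁ := by simp [hγdef]
    have hγ1 : γ 1 = w := by simp [hγdef]
    have hγim : ∀ s ∈ Icc (0:ℝ) 1, γ s ∈ {w : ℂ | 0 < w.im} := by
      intro s hs
      simp only [hγdef, Set.mem_setOf_eq, Complex.add_im, Complex.mul_im,
        Complex.ofReal_re, Complex.ofReal_im, Complex.sub_im, Complex.sub_re]
      obtain ⟨hs0, hs1⟩ := hs
      nlinarith [hz₁im, hw, mul_nonneg hs0 hw.le, mul_nonneg (sub_nonneg.2 hs1) hz₁im.le]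
    have hγcont : Continuous γ :=
      continuous_const.add ((Complex.continuous_ofReal).mul continuous_const)
    have hgc : ContinuousOn (fun s : ℝ => F (γ s)) (Icc 0 1) :=
      hFcont.comp hγcont.continuousOn hγim
    have hg0lt : |F z₁| < 1 := hy₁abs
    have h3 := Real.pi_gt_three
    constructor
    · by_contra hle
      push_neg at hle
      have hlt : F w < -π := lt_of_le_of_ne hle (hFavoid w hw).2
      have hmem : -π ∈ Icc ((fun s : ℝ => F (γ s)) 1) ((fun s : ℝ => F (γ s)) 0) := by
        simp only [hγ0, hγ1]
        constructor
        · exact hlt.le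
        · have := abs_lt.1 hg0lt; linarith
      obtain ⟨s, hsmem, hFs⟩ := intermediate_value_Icc' (by norm_num : (0:ℝ) ≤ 1) hgc hmem
      exact (hFavoid (γ s) (hγim s hsmem)).2 hFs
    · by_contra hge
      push_neg at hge
      have hgt : π < F w := lt_of_le_of_ne hge (Ne.symm (hFavoid w hw).1)
      have hmem : π ∈ Icc ((fun s : ℝ => F (γ s)) 0) ((fun s : ℝ => F (γ s)) 1) := by
        simp only [hγ0, hγ1]
        constructor
        · have := abs_lt.1 hg0lt; linarith
        · exact hgt.le
      obtain ⟨s, hsmem, hFs⟩ := intermediate_value_Icc (by norm_num : (0:ℝ) ≤ 1) hgc hmem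
      exact (hFavoid (γ s) (hγim s hsmem)).1 hFs
  have hwinΘ : ∀ z : ℂ, 0 < z.im → -π < Θ z ∧ Θ z < π :=
    hwindow Θ hΘcont havoidΘ hlim1Θ
  have hwinΦ : ∀ z : ℂ, 0 < z.im → -π < Φ z ∧ Φ z < π :=
    hwindow Φ hΦcont havoidΦ hlim1Φ
  -- counts
  have hcnt : ∀ x : ℝ, x < 0 → x ∉ R → x ∉ S →
      Multiset.card (S.filter (x < ·)) ≤ Multiset.card (R.filter (x < ·)) ∧
      Multiset.card (R.filter (x < ·)) ≤ Multiset.card (S.filter (x < ·)) + 1 := by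
    intro x hx hxR hxS
    have hlimR := RPaux.msum_tendsto R x hxR
    have hlimS := RPaux.msum_tendsto S x hxS
    have hlim0 : Tendsto (fun y : ℝ => RPaux.ang ((x:ℂ) + y * Complex.I) 0)
        (𝓝[>] (0:ℝ)) (𝓝 π) := RPaux.ang_tendsto_top hx
    set cR := Multiset.card (R.filter (x < ·)) with hcRdef
    set cS := Multiset.card (S.filter (x < ·)) with hcSdef
    have hlimΘ : Tendsto (fun y : ℝ => Θ ((x:ℂ) + y * Complex.I)) (𝓝[>] (0:ℝ))
        (𝓝 (π + π * cS - π * cR)) := by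
      simp only [hΘdef]
      exact (hlim0.add hlimS).sub hlimR
    have hlimΦ : Tendsto (fun y : ℝ => Φ ((x:ℂ) + y * Complex.I)) (𝓝[>] (0:ℝ))
        (𝓝 (π * cS - π * cR)) := by
      simp only [hΦdef]
      exact hlimS.sub hlimR
    have hev1 : ∀ᶠ y : ℝ in 𝓝[>] (0:ℝ), Θ ((x:ℂ) + (y:ℂ) * Complex.I) ≤ π := by
      filter_upwards [self_mem_nhdsWithin] with y hy
      exact (hwinΘ _ (by rw [RPaux.im_aux]; exact Set.mem_Ioi.1 hy)).2.le
    have h1 : π + π * cS - π * cR ≤ π := le_of_tendsto hlimΘ hev1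
    have hev2 : ∀ᶠ y : ℝ in 𝓝[>] (0:ℝ), -π ≤ Φ ((x:ℂ) + (y:ℂ) * Complex.I) := by
      filter_upwards [self_mem_nhdsWithin] with y hy
      exact (hwinΦ _ (by rw [RPaux.im_aux]; exact Set.mem_Ioi.1 hy)).1.le
    have h2 : -π ≤ π * cS - π * cR := ge_of_tendsto hlimΦ hev2
    have hπ := Real.pi_pos
    constructor
    · have h3 : (cS:ℝ) ≤ (cR:ℝ) := by nlinarith
      exact_mod_cast h3
    · have h3 : (cR:ℝ) ≤ (cS:ℝ) + 1 := by nlinarith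
      exact_mod_cast h3
  -- main bound
  have hθb : ∀ z : ℂ, 0 < z.im → 0 < Θ z ∧ Θ z < π := by
    intro z hz
    have hmonoz : Monotone (RPaux.ang z) := fun s t h => RPaux.ang_mono hz h
    have hposz : ∀ t, 0 ≤ RPaux.ang z t := fun t => (RPaux.ang_pos z t).le
    have hSR : RPaux.msum S z ≤ RPaux.msum R z := by
      apply RPaux.sum_le_sum_of_counts _ hposz hmonoz (Multiset.card S) R S le_rfl
      intro x hxR hxS
      by_cases hx : x < 0
      · exact (hcnt x hx hxR hxS).1
      · have hnil : S.filter (x < ·) = 0 := by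
          rw [Multiset.filter_eq_nil]
          intro s hs
          have := hqneg s hs
          simp only [not_lt]
          push_neg at hx
          linarith
        simp [hnil]
    constructor
    · by_cases hR : R = 0
      · have hRz : RPaux.msum R z = 0 := by rw [hR]; rfl
        have h0 := RPaux.ang_pos z 0
        have h1 := RPaux.msum_nonneg S z
        simp only [hΘdef]
        linarith
      · obtain ⟨r, hrR, hrmax⟩ := RPaux.exists_max R hR
        have hrneg : r < 0 := hpneg r hrR
        set R' := R.erase r with hR'def
        have hReq : R = r ::ₘ R' := (Multiset.cons_erase hrR).symm
        have hmsumR : RPaux.msum R z = RPaux.ang z r + RPaux.msum R' z := by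
          conv_lhs => rw [hReq]
          exact RPaux.msum_cons r R' z
        have hR'S : RPaux.msum R' z ≤ RPaux.msum S z := by
          apply RPaux.sum_le_sum_of_counts _ hposz hmonoz (Multiset.card R') S R' le_rfl
          intro x hxS hxR'
          by_cases hxr : r ≤ x
          · have hnil : R'.filter (x < ·) = 0 := by
              rw [Multiset.filter_eq_nil]
              intro c hc
              have hcR : c ∈ R := by rw [hReq]; exact Multiset.mem_cons_of_mem hc
              have := hrmax c hcR
              simp only [not_lt]
              linarith
            simp [hnil]
          · push_neg at hxr
            have hx0 : x < 0 := lt_trans hxr hrneg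
            have hxR : x ∉ R := by
              rw [hReq]
              intro h
              rcases Multiset.mem_cons.1 h with rfl | h'
              · exact absurd rfl (ne_of_lt hxr)
              · exact hxR' h'
            have h2 := (hcnt x hx0 hxR hxS).2
            have hcard : Multiset.card (R.filter (x < ·))
                = Multiset.card (R'.filter (x < ·)) + 1 := by
              rw [hReq, Multiset.filter_cons_of_pos _ hxr, Multiset.card_cons]
            omega
        have hlt := RPaux.ang_strictMono hz hrneg
        simp only [hΘdef]
        linarith
    · have := RPaux.ang_lt_pi z 0
      simp only [hΘdef]
      linarith
  -- conclusion
  intro a b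
  by_cases hab : a = 0 ∧ b = 0
  · obtain ⟨rfl, rfl⟩ := hab
    have h00 : C (0:ℝ) * p + C (0:ℝ) * (X * q) = 0 := by simp
    rw [h00]
    simp [RealRooted]
  · set f := C a * p + C b * (X * q) with hfdef
    have hkey : ∀ z : ℂ, 0 < z.im → aeval z f ≠ 0 := by
      intro z hz h0
      obtain ⟨ρP, ρQ, hρP, hρQ, hP, hQ⟩ := hphase z hz
      have hzne : z ≠ 0 := fun h => by rw [h] at hz; simp at hz
      have habsz : 0 < ‖z‖ := norm_pos_iff.2 hzne
      have hPne : aeval z p ≠ 0 := RPaux.aeval_ne_zero_of_im hpR hpne (ne_of_gt hz)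
      have heval : aeval z f = (a:ℂ) * aeval z p + (b:ℂ) * (z * aeval z q) := by
        rw [hfdef, map_add, map_mul, map_mul, map_mul, aeval_C, aeval_C, aeval_X]
        simp only [Complex.coe_algebraMap, mul_assoc]
      rw [heval] at h0
      by_cases hb : b = 0
      · have haz : a ≠ 0 := fun h => hab ⟨h, hb⟩
        rw [hb] at h0
        push_cast at h0
        simp only [zero_mul, add_zero] at h0
        rcases mul_eq_zero.1 h0 with h | h
        · exact haz (by exact_mod_cast h)
        · exact hPne h
      · -- polar substitution
        have hz0 : z = ((‖z‖ : ℝ) : ℂ) *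
            Complex.exp ((RPaux.ang z 0 : ℝ) * Complex.I) := by
          have := RPaux.ang_spec hz 0
          simpa using this
        have haux : Complex.exp ((RPaux.ang z 0 : ℝ) * Complex.I) *
            Complex.exp ((RPaux.msum S z : ℝ) * Complex.I)
            = Complex.exp ((Θ z : ℝ) * Complex.I) *
              Complex.exp ((RPaux.msum R z : ℝ) * Complex.I) := by
          rw [← Complex.exp_add, ← Complex.exp_add, ← add_mul, ← add_mul]
          norm_cast
          rw [show RPaux.ang z 0 + RPaux.msum S z = Θ z + RPaux.msum R z by
            simp only [hΘdef]; ring]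
        rw [hP, hQ] at h0
        have hder : ((b * (‖z‖ * ρQ) : ℝ) : ℂ) *
            Complex.exp ((Θ z : ℝ) * Complex.I) *
            Complex.exp ((RPaux.msum R z : ℝ) * Complex.I)
            = ((-(a * ρP) : ℝ) : ℂ) * Complex.exp ((RPaux.msum R z : ℝ) * Complex.I) := by
          push_cast
          linear_combination h0 +
            (-((b:ℂ) * (ρQ:ℂ) * Complex.exp ((RPaux.msum S z : ℝ) * Complex.I))) * hz0 +
            (-((b:ℂ) * ((‖z‖ : ℝ):ℂ) * (ρQ:ℂ))) * haux
        have hder2 : ((b * (‖z‖ * ρQ) : ℝ) : ℂ) *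
            Complex.exp ((Θ z : ℝ) * Complex.I) = ((-(a * ρP) : ℝ) : ℂ) :=
          mul_right_cancel₀ (Complex.exp_ne_zero _) hder
        have him := congrArg Complex.im hder2
        simp only [Complex.mul_im, Complex.ofReal_re, Complex.ofReal_im,
          Complex.exp_ofReal_mul_I_im, Complex.exp_ofReal_mul_I_re, zero_mul, add_zero,
          mul_zero, zero_add] at him
        have hsin : 0 < Real.sin (Θ z) :=
          Real.sin_pos_of_pos_of_lt_pi (hθb z hz).1 (hθb z hz).2
        have : b * (‖z‖ * ρQ) = 0 := by
          rcases mul_eq_zero.1 him with h | h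
          · exact h
          · exact absurd h (ne_of_gt hsin)
        have hbne : ‖z‖ * ρQ > 0 := mul_pos habsz hρQ
        rcases mul_eq_zero.1 this with h | h
        · exact hb h
        · exact absurd h (ne_of_gt hbne)
    show (Multiset.card f.roots : ℕ) = f.natDegree
    apply RPaux.realRooted_of_complex f.natDegree f le_rfl
    intro z hz
    rcases lt_trichotomy z.im 0 with hlt | heq | hgt
    · exfalso
      have h2 : aeval ((starRingEnd ℂ) z) f = 0 := by
        rw [RPaux.aeval_conj, hz, map_zero]
      have h3 : 0 < ((starRingEnd ℂ) z).im := by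
        rw [Complex.conj_im]
        linarith
      exact hkey _ h3 h2
    · exact heq
    · exact absurd hz (hkey z hgt)
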